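/- For every n ≥ 2, the canonical monoid homomorphism from the singular twisted virtual braid monoid STVB_n to the singular twisted virtual group STVG_n, sending σ_i ↦ σ_i, σ̄_i ↦ σ_i⁻¹, ρ_i ↦ ρ_i, τ_i ↦ τ_i and γ_j ↦ γ_j, is well defined and injective; that is, STVB_n embeds in the group STVG_n. -/

import Mathlib

namespace SingTVB

/-- Generators of the singular twisted virtual braid monoid `STVB n`
(0-based indexing: `sig i` is the paper's σ_{i+1}, `gam j` is the paper's γ_{j+1}). -/
inductive Gen (n : ℕ) : Type
  | sig : Fin (n - 1) → Gen n
  | sigb : Fin (n - 1) → Gen n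
  | rho : Fin (n - 1) → Gen n
  | tau : Fin (n - 1) → Gen n
  | gam : Fin n → Gen n

abbrev FM (n : ℕ) := FreeMonoid (Gen n)

/-- The strand `i` (lower strand of the `i`-th crossing), as an element of `Fin n`. -/
def fa {n : ℕ} (i : Fin (n - 1)) : Fin n := ⟨i.val, by have := i.isLt; omega⟩
/-- The strand `i+1` (upper strand of the `i`-th crossing), as an element of `Fin n`. -/
def fb {n : ℕ} (i : Fin (n - 1)) : Fin n := ⟨i.val + 1, by have := i.isLt; omega⟩

def Ws {n : ℕ} (i : Fin (n - 1)) : FM n := FreeMonoid.of (Gen.sig i)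
def Wsb {n : ℕ} (i : Fin (n - 1)) : FM n := FreeMonoid.of (Gen.sigb i)
def Wr {n : ℕ} (i : Fin (n - 1)) : FM n := FreeMonoid.of (Gen.rho i)
def Wt {n : ℕ} (i : Fin (n - 1)) : FM n := FreeMonoid.of (Gen.tau i)
def Wg {n : ℕ} (j : Fin n) : FM n := FreeMonoid.of (Gen.gam j)

/-- `|i - j| > 1`. -/
def Far {m : ℕ} (i j : Fin m) : Prop := i.val + 1 < j.val ∨ j.val + 1 < i.val

/-- Defining relations of the singular twisted virtual braid monoid. -/
inductive Rel (n : ℕ) : FM n → FM n → Prop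
  | ss {i j : Fin (n - 1)} (h : Far i j) : Rel n (Ws i * Ws j) (Ws j * Ws i)
  | rr {i j : Fin (n - 1)} (h : Far i j) : Rel n (Wr i * Wr j) (Wr j * Wr i)
  | sr {i j : Fin (n - 1)} (h : Far i j) : Rel n (Ws i * Wr j) (Wr j * Ws i)
  | tt {i j : Fin (n - 1)} (h : Far i j) : Rel n (Wt i * Wt j) (Wt j * Wt i)
  | st {i j : Fin (n - 1)} (h : Far i j) : Rel n (Ws i * Wt j) (Wt j * Ws i)
  | tr {i j : Fin (n - 1)} (h : Far i j) : Rel n (Wt i * Wr j) (Wr j * Wt i)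
  | sss {i j : Fin (n - 1)} (h : j.val = i.val + 1) :
      Rel n (Ws i * Ws j * Ws i) (Ws j * Ws i * Ws j)
  | rrr {i j : Fin (n - 1)} (h : j.val = i.val + 1) :
      Rel n (Wr i * Wr j * Wr i) (Wr j * Wr i * Wr j)
  | rsr {i j : Fin (n - 1)} (h : j.val = i.val + 1) :
      Rel n (Wr i * Ws j * Wr i) (Wr j * Ws i * Wr j)
  | rtr {i j : Fin (n - 1)} (h : j.val = i.val + 1) :
      Rel n (Wr i * Wt j * Wr i) (Wr j * Wt i * Wr j)
  | sst {i j : Fin (n - 1)} (h : j.val = i.val + 1) :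
      Rel n (Ws i * Ws j * Wt i) (Wt j * Ws i * Ws j)
  | sst' {i j : Fin (n - 1)} (h : j.val = i.val + 1) :
      Rel n (Ws j * Ws i * Wt j) (Wt i * Ws j * Ws i)
  | rho2 (i : Fin (n - 1)) : Rel n (Wr i * Wr i) 1
  | ssb (i : Fin (n - 1)) : Rel n (Ws i * Wsb i) 1
  | sbs (i : Fin (n - 1)) : Rel n (Wsb i * Ws i) 1
  | stc (i : Fin (n - 1)) : Rel n (Ws i * Wt i) (Wt i * Ws i)
  | grel (i : Fin (n - 1)) : Rel n (Wg (fb i) * Wr i) (Wr i * Wg (fa i))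
  | rsrg (i : Fin (n - 1)) :
      Rel n (Wr i * Ws i * Wr i) (Wg (fb i) * Wg (fa i) * Ws i * Wg (fa i) * Wg (fb i))
  | rtrg (i : Fin (n - 1)) :
      Rel n (Wr i * Wt i * Wr i) (Wg (fb i) * Wg (fa i) * Wt i * Wg (fa i) * Wg (fb i))
  | g2 (j : Fin n) : Rel n (Wg j * Wg j) 1
  | gg (i j : Fin n) : Rel n (Wg i * Wg j) (Wg j * Wg i)
  | grc {i : Fin (n - 1)} {j : Fin n} (h1 : j ≠ fa i) (h2 : j ≠ fb i) :
      Rel n (Wg j * Wr i) (Wr i * Wg j)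
  | sgc {i : Fin (n - 1)} {j : Fin n} (h1 : j ≠ fa i) (h2 : j ≠ fb i) :
      Rel n (Ws i * Wg j) (Wg j * Ws i)
  | tgc {i : Fin (n - 1)} {j : Fin n} (h1 : j ≠ fa i) (h2 : j ≠ fb i) :
      Rel n (Wt i * Wg j) (Wg j * Wt i)

/-- The singular twisted virtual braid monoid on `n` strands. -/
abbrev STVB (n : ℕ) := PresentedMonoid (Rel n)

def mkS (n : ℕ) : FM n →* STVB n := PresentedMonoid.mk (Rel n)

def sigE (n : ℕ) (i : Fin (n - 1)) : STVB n := mkS n (Ws i)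
def sigbE (n : ℕ) (i : Fin (n - 1)) : STVB n := mkS n (Wsb i)
def rhoE (n : ℕ) (i : Fin (n - 1)) : STVB n := mkS n (Wr i)
def tauE (n : ℕ) (i : Fin (n - 1)) : STVB n := mkS n (Wt i)
def gamE (n : ℕ) (j : Fin n) : STVB n := mkS n (Wg j)

/-- The transposition `(i, i+1)` in the symmetric group on `Fin n`. -/
def swp {n : ℕ} (i : Fin (n - 1)) : Equiv.Perm (Fin n) := Equiv.swap (fa i) (fb i)

end SingTVB
namespace SingTVG

/-- Generators of the singular twisted virtual group `STVG n` (0-based indexing). -/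
inductive GGen (n : ℕ) : Type
  | sig : Fin (n - 1) → GGen n
  | rho : Fin (n - 1) → GGen n
  | tau : Fin (n - 1) → GGen n
  | taub : Fin (n - 1) → GGen n
  | gam : Fin n → GGen n

abbrev FG (n : ℕ) := FreeGroup (GGen n)

def fa {n : ℕ} (i : Fin (n - 1)) : Fin n := ⟨i.val, by have := i.isLt; omega⟩
def fb {n : ℕ} (i : Fin (n - 1)) : Fin n := ⟨i.val + 1, by have := i.isLt; omega⟩

def ws {n : ℕ} (i : Fin (n - 1)) : FG n := FreeGroup.of (GGen.sig i)
def wr {n : ℕ} (i : Fin (n - 1)) : FG n := FreeGroup.of (GGen.rho i)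
def wt {n : ℕ} (i : Fin (n - 1)) : FG n := FreeGroup.of (GGen.tau i)
def wtb {n : ℕ} (i : Fin (n - 1)) : FG n := FreeGroup.of (GGen.taub i)
def wg {n : ℕ} (j : Fin n) : FG n := FreeGroup.of (GGen.gam j)

/-- `|i - j| > 1`. -/
def Far {m : ℕ} (i j : Fin m) : Prop := i.val + 1 < j.val ∨ j.val + 1 < i.val

/-- Defining relations of `STVG n`, as pairs of equal words. -/
inductive GRel (n : ℕ) : FG n → FG n → Prop
  | ss {i j : Fin (n - 1)} (h : Far i j) : GRel n (ws i * ws j) (ws j * ws i)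
  | rr {i j : Fin (n - 1)} (h : Far i j) : GRel n (wr i * wr j) (wr j * wr i)
  | sr {i j : Fin (n - 1)} (h : Far i j) : GRel n (ws i * wr j) (wr j * ws i)
  | tt {i j : Fin (n - 1)} (h : Far i j) : GRel n (wt i * wt j) (wt j * wt i)
  | st {i j : Fin (n - 1)} (h : Far i j) : GRel n (ws i * wt j) (wt j * ws i)
  | tr {i j : Fin (n - 1)} (h : Far i j) : GRel n (wt i * wr j) (wr j * wt i)
  | tbtb {i j : Fin (n - 1)} (h : Far i j) : GRel n (wtb i * wtb j) (wtb j * wtb i)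
  | tbt {i j : Fin (n - 1)} (h : Far i j) : GRel n (wtb i * wt j) (wt j * wtb i)
  | stb {i j : Fin (n - 1)} (h : Far i j) : GRel n (ws i * wtb j) (wtb j * ws i)
  | tbr {i j : Fin (n - 1)} (h : Far i j) : GRel n (wtb i * wr j) (wr j * wtb i)
  | sss {i j : Fin (n - 1)} (h : j.val = i.val + 1) :
      GRel n (ws i * ws j * ws i) (ws j * ws i * ws j)
  | rrr {i j : Fin (n - 1)} (h : j.val = i.val + 1) :
      GRel n (wr i * wr j * wr i) (wr j * wr i * wr j)
  | rsr {i j : Fin (n - 1)} (h : j.val = i.val + 1) :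
      GRel n (wr i * ws j * wr i) (wr j * ws i * wr j)
  | rtr {i j : Fin (n - 1)} (h : j.val = i.val + 1) :
      GRel n (wr i * wt j * wr i) (wr j * wt i * wr j)
  | rtbr {i j : Fin (n - 1)} (h : j.val = i.val + 1) :
      GRel n (wr i * wtb j * wr i) (wr j * wtb i * wr j)
  | sst {i j : Fin (n - 1)} (h : j.val = i.val + 1) :
      GRel n (ws i * ws j * wt i) (wt j * ws i * ws j)
  | sst' {i j : Fin (n - 1)} (h : j.val = i.val + 1) :
      GRel n (ws j * ws i * wt j) (wt i * ws j * ws i)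
  | sstb {i j : Fin (n - 1)} (h : j.val = i.val + 1) :
      GRel n (ws i * ws j * wtb i) (wtb j * ws i * ws j)
  | sstb' {i j : Fin (n - 1)} (h : j.val = i.val + 1) :
      GRel n (ws j * ws i * wtb j) (wtb i * ws j * ws i)
  | rho2 (i : Fin (n - 1)) : GRel n (wr i * wr i) 1
  | stc (i : Fin (n - 1)) : GRel n (ws i * wt i) (wt i * ws i)
  | stbc (i : Fin (n - 1)) : GRel n (ws i * wtb i) (wtb i * ws i)
  | grel (i : Fin (n - 1)) : GRel n (wg (fb i) * wr i) (wr i * wg (fa i))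
  | rsrg (i : Fin (n - 1)) :
      GRel n (wr i * ws i * wr i) (wg (fb i) * wg (fa i) * ws i * wg (fa i) * wg (fb i))
  | rtrg (i : Fin (n - 1)) :
      GRel n (wr i * wt i * wr i) (wg (fb i) * wg (fa i) * wt i * wg (fa i) * wg (fb i))
  | rtbrg (i : Fin (n - 1)) :
      GRel n (wr i * wtb i * wr i) (wg (fb i) * wg (fa i) * wtb i * wg (fa i) * wg (fb i))
  | tbt1 (i : Fin (n - 1)) : GRel n (wtb i * wt i) 1
  | g2 (j : Fin n) : GRel n (wg j * wg j) 1
  | ggc (i j : Fin n) : GRel n (wg i * wg j) (wg j * wg i)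
  | grc {i : Fin (n - 1)} {j : Fin n} (h1 : j ≠ fa i) (h2 : j ≠ fb i) :
      GRel n (wg j * wr i) (wr i * wg j)
  | sgc {i : Fin (n - 1)} {j : Fin n} (h1 : j ≠ fa i) (h2 : j ≠ fb i) :
      GRel n (ws i * wg j) (wg j * ws i)
  | tgc {i : Fin (n - 1)} {j : Fin n} (h1 : j ≠ fa i) (h2 : j ≠ fb i) :
      GRel n (wt i * wg j) (wg j * wt i)
  | tbgc {i : Fin (n - 1)} {j : Fin n} (h1 : j ≠ fa i) (h2 : j ≠ fb i) :
      GRel n (wtb i * wg j) (wg j * wtb i)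

/-- The set of relators `u * v⁻¹` for the relations `u = v` of `STVG n`. -/
def grels (n : ℕ) : Set (FG n) := {x | ∃ u v : FG n, GRel n u v ∧ x = u * v⁻¹}

/-- The singular twisted virtual group on `n` strands. -/
abbrev STVG (n : ℕ) := PresentedGroup (grels n)

def sigG (n : ℕ) (i : Fin (n - 1)) : STVG n := PresentedGroup.of (GGen.sig i)
def rhoG (n : ℕ) (i : Fin (n - 1)) : STVG n := PresentedGroup.of (GGen.rho i)
def tauG (n : ℕ) (i : Fin (n - 1)) : STVG n := PresentedGroup.of (GGen.tau i)
def taubG (n : ℕ) (i : Fin (n - 1)) : STVG n := PresentedGroup.of (GGen.taub i)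
def gamG (n : ℕ) (j : Fin n) : STVG n := PresentedGroup.of (GGen.gam j)

/-- The transposition `(i, i+1)` in the symmetric group on `Fin n`. -/
def swpG {n : ℕ} (i : Fin (n - 1)) : Equiv.Perm (Fin n) := Equiv.swap (fa i) (fb i)

end SingTVG


namespace TraceAux

variable {α : Type*} (ind : α → α → Prop)

/-- one swap of adjacent independent letters -/
def Step (L M : List α) : Prop :=
  ∃ (p s : List α) (a b : α), ind a b ∧ L = p ++ a :: b :: s ∧ M = p ++ b :: a :: s

/-- trace equivalence -/
def TraceRel (L M : List α) : Prop := Relation.ReflTransGen (Step ind) L M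

variable {ind}

theorem step_symm (hsymm : ∀ a b, ind a b → ind b a) {L M : List α} (h : Step ind L M) :
    Step ind M L := by
  obtain ⟨p, s, a, b, hi, h1, h2⟩ := h
  exact ⟨p, s, b, a, hsymm _ _ hi, h2, h1⟩

theorem traceRel_refl (L : List α) : TraceRel ind L L := Relation.ReflTransGen.refl

theorem traceRel_trans {L M P : List α} (h1 : TraceRel ind L M) (h2 : TraceRel ind M P) :
    TraceRel ind L P := Relation.ReflTransGen.trans h1 h2

theorem traceRel_symm (hsymm : ∀ a b, ind a b → ind b a) {L M : List α}
    (h : TraceRel ind L M) : TraceRel ind M L := by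
  induction h with
  | refl => exact Relation.ReflTransGen.refl
  | tail _ hstep ih =>
      exact traceRel_trans (Relation.ReflTransGen.single (step_symm hsymm hstep)) ih

theorem step_cons {L M : List α} (c : α) (h : Step ind L M) : Step ind (c :: L) (c :: M) := by
  obtain ⟨p, s, a, b, hi, h1, h2⟩ := h
  exact ⟨c :: p, s, a, b, hi, by simp [h1], by simp [h2]⟩

theorem traceRel_cons {L M : List α} (c : α) (h : TraceRel ind L M) :
    TraceRel ind (c :: L) (c :: M) := by
  induction h with
  | refl => exact Relation.ReflTransGen.refl
  | tail _ hstep ih => exact Relation.ReflTransGen.tail ih (step_cons c hstep)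

/-- move a letter independent from everything in `p` to the front -/
theorem traceRel_move_front {a : α} : ∀ (p : List α), (∀ b ∈ p, ind b a) →
    ∀ s : List α, TraceRel ind (p ++ a :: s) (a :: (p ++ s)) := by
  intro p
  induction p with
  | nil => intro _ s; simp [traceRel_refl]
  | cons c p ih =>
      intro hp s
      have h1 : TraceRel ind (c :: (p ++ a :: s)) (c :: (a :: (p ++ s))) :=
        traceRel_cons c (ih (fun b hb => hp b (List.mem_cons_of_mem _ hb)) s)
      have h2 : Step ind (c :: a :: (p ++ s)) (a :: c :: (p ++ s)) :=
        ⟨[], p ++ s, c, a, hp c (List.mem_cons_self), by simp, by simp⟩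
      simpa using traceRel_trans h1 (Relation.ReflTransGen.single h2)

theorem first_split {a : α} : ∀ {v : List α}, a ∈ v →
    ∃ v₁ v₂, v = v₁ ++ a :: v₂ ∧ a ∉ v₁ := by
  intro v
  induction v with
  | nil => intro h; simp at h
  | cons c v ih =>
      intro h
      by_cases hca : a = c
      · exact ⟨[], v, by simp [hca], by simp⟩
      · have : a ∈ v := by
          rcases List.mem_cons.mp h with h' | h'
          · exact absurd h' hca
          · exact h'
        obtain ⟨v₁, v₂, h1, h2⟩ := ih this
        refine ⟨c :: v₁, v₂, by simp [h1], ?_⟩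
        simp only [List.mem_cons, not_or]
        exact ⟨hca, h2⟩

open Classical in
/-- The projection lemma for traces. -/
theorem projection_lemma (hsymm : ∀ a b, ind a b → ind b a) :
    ∀ (u : List α), ∀ v : List α,
    (∀ a : α, (u.filter (fun c => decide (c = a))).length
      = (v.filter (fun c => decide (c = a))).length) →
    (∀ a b : α, a ≠ b → ¬ ind a b →
      u.filter (fun c => decide (c = a ∨ c = b)) = v.filter (fun c => decide (c = a ∨ c = b))) →
    TraceRel ind u v := by
  intro u
  induction u with
  | nil =>
      intro v hcount _
      have hv : v = [] := by
        cases v with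
        | nil => rfl
        | cons a v' =>
            exfalso
            have := hcount a
            simp at this
      rw [hv]; exact traceRel_refl _
  | cons a u' ih =>
      intro v hcount hproj
      -- a occurs in v
      have hmem : a ∈ v := by
        by_contra hna
        have := hcount a
        have h2 : List.filter (fun c => decide (c = a)) v = [] := by
          apply List.filter_eq_nil_iff.mpr
          intro x hx
          simp only [decide_eq_true_eq]
          intro hxa; exact hna (hxa ▸ hx)
        rw [h2] at this
        simp at this
      obtain ⟨v₁, v₂, hv, hnv₁⟩ := first_split hmem
      -- every letter in v₁ is independent from a
      have hind : ∀ b ∈ v₁, ind b a := by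
        intro b hb
        by_contra hnab
        have hba : b ≠ a := fun h => hnv₁ (h ▸ hb)
        have hnotind : ¬ ind a b := fun h => hnab (hsymm _ _ h)
        have := hproj a b hba.symm hnotind
        rw [hv] at this
        -- analyze the filtered lists
        have hfa : List.filter (fun c => decide (c = a ∨ c = b)) (a :: u')
            = a :: List.filter (fun c => decide (c = a ∨ c = b)) u' := by
          simp
        have hfv1 : b ∈ List.filter (fun c => decide (c = a ∨ c = b)) v₁ := by
          simp [List.mem_filter, hb]
        rw [hfa, List.filter_append] at this
        -- RHS = filter v₁ ++ filter (a :: v₂), filter v₁ nonempty with head ≠ a?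
        cases hfil : List.filter (fun c => decide (c = a ∨ c = b)) v₁ with
        | nil => rw [hfil] at hfv1; simp at hfv1
        | cons x xs =>
            rw [hfil] at this
            have hx : x ∈ List.filter (fun c => decide (c = a ∨ c = b)) v₁ := by
              rw [hfil]; exact List.mem_cons_self
            have hxv₁ : x ∈ v₁ := List.mem_of_mem_filter hx
            have hxab : x = a ∨ x = b := by
              have := List.of_mem_filter hx
              simpa using this
            have hxa : x ≠ a := fun h => hnv₁ (h ▸ hxv₁)
            have heq : a = x := by
              have h' := congrArg (fun l => l.head?) this
              simpa using h'
            exact hxa heq.symm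
      -- now rearrange v and apply the induction hypothesis
      have hmove : TraceRel ind v (a :: (v₁ ++ v₂)) := by
        rw [hv]; exact traceRel_move_front v₁ hind v₂
      have hIH : TraceRel ind u' (v₁ ++ v₂) := by
        apply ih
        · intro x
          have hc := hcount x
          rw [hv, List.filter_append] at hc
          by_cases hax : a = x
          · subst hax
            have hfv1 : List.filter (fun c => decide (c = a)) v₁ = [] := by
              apply List.filter_eq_nil_iff.mpr
              intro c hc' hdec
              simp only [decide_eq_true_eq] at hdec
              exact hnv₁ (hdec ▸ hc')
            rw [hfv1] at hc
            simp only [List.filter_cons, decide_eq_true_eq] at hc ⊢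
            simp at hc
            rw [List.filter_append, hfv1]
            simpa using hc
          · have hd : (decide (a = x)) = false := by simpa using hax
            simp only [List.filter_cons, hd] at hc ⊢
            rw [List.filter_append]
            simpa using hc
        · intro x y hxy hnind
          have hp := hproj x y hxy hnind
          rw [hv, List.filter_append] at hp
          by_cases hax : a = x ∨ a = y
          · have hfv1 : List.filter (fun c => decide (c = x ∨ c = y)) v₁ = [] := by
              apply List.filter_eq_nil_iff.mpr
              intro c hc' hdec
              simp only [decide_eq_true_eq] at hdec
              have hca : c ≠ a := fun h => hnv₁ (h ▸ hc')
              have hia : ind c a := hind c hc'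
              rcases hdec with hcx | hcy <;> rcases hax with hax | hay
              · exact hca (hcx.trans hax.symm)
              · exact hnind (by subst hcx; subst hay; exact hia)
              · exact hnind (by subst hcy; subst hax; exact hsymm _ _ hia)
              · exact hca (hcy.trans hay.symm)
            rw [hfv1] at hp
            have hda : (decide (a = x ∨ a = y)) = true := by simpa using hax
            simp only [List.filter_cons, hda, cond_true, List.nil_append] at hp
            rw [List.filter_append, hfv1, List.nil_append]
            exact List.tail_eq_of_cons_eq hp
          · have hda : (decide (a = x ∨ a = y)) = false := by simpa using hax
            simp only [List.filter_cons, hda, cond_false] at hp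
            rw [List.filter_append]
            exact hp
      exact traceRel_trans (traceRel_cons a hIH) (traceRel_symm hsymm hmove)

end TraceAux

namespace TraceAux

open Classical in
theorem posProd_eq_mk {α : Type*} (L : List α) :
    (L.map FreeGroup.of).prod = FreeGroup.mk (L.map (fun a => (a, true))) := by
  induction L with
  | nil => simp [FreeGroup.one_eq_mk]
  | cons a L ih =>
      simp only [List.map_cons, List.prod_cons, ih]
      rw [show (FreeGroup.of a : FreeGroup α) = FreeGroup.mk [(a, true)] from rfl,
        FreeGroup.mul_mk]
      rfl

open Classical in
theorem reduce_pos {α : Type*} [DecidableEq α] (L : List α) :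
    FreeGroup.reduce (L.map (fun a => (a, true))) = L.map (fun a => (a, true)) := by
  induction L with
  | nil => simp
  | cons a L ih =>
      rw [List.map_cons, FreeGroup.reduce.cons, ih]
      cases L with
      | nil => simp
      | cons b L' => simp

open Classical in
theorem posProd_injective {α : Type*} {L₁ L₂ : List α}
    (h : (L₁.map FreeGroup.of).prod = (L₂.map FreeGroup.of).prod) : L₁ = L₂ := by
  classical
  rw [posProd_eq_mk, posProd_eq_mk] at h
  have h2 := congrArg FreeGroup.toWord h
  rw [FreeGroup.toWord_mk, FreeGroup.toWord_mk, reduce_pos, reduce_pos] at h2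
  have : Function.Injective (fun a : α => (a, true)) := fun x y hxy => by
    simpa using congrArg Prod.fst hxy
  exact List.map_injective_iff.mpr this h2

end TraceAux
namespace Emb

open SingTVB

variable {n : ℕ}

/-- Generators of the twisted virtual braid group `G n`. -/
inductive GenG (n : ℕ) : Type
  | s : Fin (n - 1) → GenG n
  | r : Fin (n - 1) → GenG n
  | c : Fin n → GenG n

abbrev FGG (n : ℕ) := FreeGroup (GenG n)

def es {n : ℕ} (i : Fin (n - 1)) : FGG n := FreeGroup.of (GenG.s i)
def er {n : ℕ} (i : Fin (n - 1)) : FGG n := FreeGroup.of (GenG.r i)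
def ec {n : ℕ} (j : Fin n) : FGG n := FreeGroup.of (GenG.c j)

/-- Defining relations of the twisted virtual braid group. -/
inductive RelG (n : ℕ) : FGG n → FGG n → Prop
  | ss {i j : Fin (n - 1)} (h : Far i j) : RelG n (es i * es j) (es j * es i)
  | rr {i j : Fin (n - 1)} (h : Far i j) : RelG n (er i * er j) (er j * er i)
  | sr {i j : Fin (n - 1)} (h : Far i j) : RelG n (es i * er j) (er j * es i)
  | sss {i j : Fin (n - 1)} (h : j.val = i.val + 1) :
      RelG n (es i * es j * es i) (es j * es i * es j)
  | rrr {i j : Fin (n - 1)} (h : j.val = i.val + 1) :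
      RelG n (er i * er j * er i) (er j * er i * er j)
  | rsr {i j : Fin (n - 1)} (h : j.val = i.val + 1) :
      RelG n (er i * es j * er i) (er j * es i * er j)
  | rho2 (i : Fin (n - 1)) : RelG n (er i * er i) 1
  | grel (i : Fin (n - 1)) : RelG n (ec (fb i) * er i) (er i * ec (fa i))
  | rsrg (i : Fin (n - 1)) :
      RelG n (er i * es i * er i) (ec (fb i) * ec (fa i) * es i * ec (fa i) * ec (fb i))
  | g2 (j : Fin n) : RelG n (ec j * ec j) 1
  | gg (i j : Fin n) : RelG n (ec i * ec j) (ec j * ec i)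
  | grc {i : Fin (n - 1)} {j : Fin n} (h1 : j ≠ fa i) (h2 : j ≠ fb i) :
      RelG n (ec j * er i) (er i * ec j)
  | sgc {i : Fin (n - 1)} {j : Fin n} (h1 : j ≠ fa i) (h2 : j ≠ fb i) :
      RelG n (es i * ec j) (ec j * es i)

def relsG (n : ℕ) : Set (FGG n) := {x | ∃ u v : FGG n, RelG n u v ∧ x = u * v⁻¹}

/-- The twisted virtual braid group. -/
abbrev G (n : ℕ) := PresentedGroup (relsG n)

def mkG (n : ℕ) : FGG n →* G n := PresentedGroup.mk (relsG n)

def gs {n : ℕ} (i : Fin (n - 1)) : G n := mkG n (es i)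
def gr {n : ℕ} (i : Fin (n - 1)) : G n := mkG n (er i)
def gc {n : ℕ} (j : Fin n) : G n := mkG n (ec j)

theorem relG_eq {u v : FGG n} (h : RelG n u v) : mkG n u = mkG n v := by
  have h1 : (mkG n (u * v⁻¹)) = 1 := by
    apply (QuotientGroup.eq_one_iff _).mpr
    exact Subgroup.subset_normalClosure ⟨u, v, h, rfl⟩
  rw [map_mul, map_inv] at h1
  exact (mul_inv_eq_one.mp h1)

theorem gr_sq (i : Fin (n - 1)) : gr (n := n) i * gr i = 1 := relG_eq (RelG.rho2 i)
theorem gc_sq (j : Fin n) : gc (n := n) j * gc j = 1 := relG_eq (RelG.g2 j)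
theorem gr_inv (i : Fin (n - 1)) : (gr (n := n) i)⁻¹ = gr i := by
  rw [inv_eq_iff_mul_eq_one, gr_sq]
theorem gc_inv (j : Fin n) : (gc (n := n) j)⁻¹ = gc j := by
  rw [inv_eq_iff_mul_eq_one, gc_sq]

/-! ### Bands -/

/-- Moves identifying conjugation data for bands. -/
inductive Mv (n : ℕ) : G n × Fin (n - 1) → G n × Fin (n - 1) → Prop
  | mstc (i : Fin (n - 1)) (g : G n) : Mv n (g * gs i, i) (g, i)
  | mfarS {i j : Fin (n - 1)} (h : Far i j) (g : G n) : Mv n (g * gs i, j) (g, j)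
  | mfarR {i j : Fin (n - 1)} (h : Far i j) (g : G n) : Mv n (g * gr i, j) (g, j)
  | mgc {i : Fin (n - 1)} {j : Fin n} (h1 : j ≠ fa i) (h2 : j ≠ fb i) (g : G n) :
      Mv n (g * gc j, i) (g, i)
  | mrtr {i j : Fin (n - 1)} (h : j.val = i.val + 1) (g : G n) :
      Mv n (g * gr i, j) (g * gr j, i)
  | mrtrg (i : Fin (n - 1)) (g : G n) :
      Mv n (g * gr i, i) (g * gc (fb i) * gc (fa i), i)
  | msst {i j : Fin (n - 1)} (h : j.val = i.val + 1) (g : G n) :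
      Mv n (g * gs i * gs j, i) (g, j)
  | msst' {i j : Fin (n - 1)} (h : j.val = i.val + 1) (g : G n) :
      Mv n (g * gs j * gs i, j) (g, i)

/-- The set of bands. -/
def B (n : ℕ) := Quotient (Relation.EqvGen.setoid (Mv n))

def bnd {n : ℕ} (g : G n) (i : Fin (n - 1)) : B n :=
  Quotient.mk (Relation.EqvGen.setoid (Mv n)) (g, i)

theorem bnd_eq_of_mv {p q : G n × Fin (n - 1)} (h : Mv n p q) :
    bnd p.1 p.2 = bnd q.1 q.2 := Quotient.sound (Relation.EqvGen.rel _ _ h)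

theorem bnd_stc (g : G n) (i : Fin (n - 1)) : bnd (g * gs i) i = bnd g i :=
  bnd_eq_of_mv (Mv.mstc i g)
theorem bnd_farS {i j : Fin (n - 1)} (h : Far i j) (g : G n) :
    bnd (g * gs i) j = bnd g j := bnd_eq_of_mv (Mv.mfarS h g)
theorem bnd_farR {i j : Fin (n - 1)} (h : Far i j) (g : G n) :
    bnd (g * gr i) j = bnd g j := bnd_eq_of_mv (Mv.mfarR h g)
theorem bnd_gc {i : Fin (n - 1)} {j : Fin n} (h1 : j ≠ fa i) (h2 : j ≠ fb i) (g : G n) :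
    bnd (g * gc j) i = bnd g i := bnd_eq_of_mv (Mv.mgc h1 h2 g)
theorem bnd_rtr {i j : Fin (n - 1)} (h : j.val = i.val + 1) (g : G n) :
    bnd (g * gr i) j = bnd (g * gr j) i := bnd_eq_of_mv (Mv.mrtr h g)
theorem bnd_rtrg (i : Fin (n - 1)) (g : G n) :
    bnd (g * gr i) i = bnd (g * gc (fb i) * gc (fa i)) i := bnd_eq_of_mv (Mv.mrtrg i g)
theorem bnd_sst {i j : Fin (n - 1)} (h : j.val = i.val + 1) (g : G n) :
    bnd (g * gs i * gs j) i = bnd g j := bnd_eq_of_mv (Mv.msst h g)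
theorem bnd_sst' {i j : Fin (n - 1)} (h : j.val = i.val + 1) (g : G n) :
    bnd (g * gs j * gs i) j = bnd g i := bnd_eq_of_mv (Mv.msst' h g)

theorem mv_mul_left (g : G n) {p q : G n × Fin (n - 1)} (h : Mv n p q) :
    Mv n (g * p.1, p.2) (g * q.1, q.2) := by
  cases h with
  | mstc i g' => simpa [mul_assoc] using Mv.mstc (n := n) i (g * g')
  | mfarS h g' => simpa [mul_assoc] using Mv.mfarS (n := n) h (g * g')
  | mfarR h g' => simpa [mul_assoc] using Mv.mfarR (n := n) h (g * g')
  | mgc h1 h2 g' => simpa [mul_assoc] using Mv.mgc (n := n) h1 h2 (g * g')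
  | mrtr h g' => simpa [mul_assoc] using Mv.mrtr (n := n) h (g * g')
  | mrtrg i g' => simpa [mul_assoc] using Mv.mrtrg (n := n) i (g * g')
  | msst h g' => simpa [mul_assoc] using Mv.msst (n := n) h (g * g')
  | msst' h g' => simpa [mul_assoc] using Mv.msst' (n := n) h (g * g')

/-- left multiplication action of `G n` on bands -/
def actB {n : ℕ} (g : G n) : B n → B n :=
  Quotient.map (fun p => (g * p.1, p.2)) (by
    intro p q h
    induction h with
    | rel x y h => exact Relation.EqvGen.rel _ _ (mv_mul_left g h)
    | refl x => exact Relation.EqvGen.refl _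
    | symm x y _ ih => exact Relation.EqvGen.symm _ _ ih
    | trans x y z _ _ ih1 ih2 => exact Relation.EqvGen.trans _ _ _ ih1 ih2)

@[simp] theorem actB_bnd (g h : G n) (i : Fin (n - 1)) :
    actB g (bnd h i) = bnd (g * h) i := rfl

@[simp] theorem actB_one (x : B n) : actB (1 : G n) x = x := by
  induction x using Quotient.ind with
  | _ p => show bnd (1 * p.1) p.2 = bnd p.1 p.2; rw [one_mul]

theorem actB_mul (g h : G n) (x : B n) : actB (g * h) x = actB g (actB h x) := by
  induction x using Quotient.ind with
  | _ p => show bnd (g * h * p.1) p.2 = bnd (g * (h * p.1)) p.2; rw [mul_assoc]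

/-- independence of bands -/
def D (n : ℕ) (x y : B n) : Prop :=
  ∃ (g : G n) (i j : Fin (n - 1)), Far i j ∧ x = bnd g i ∧ y = bnd g j

theorem D_act {x y : B n} (g : G n) (h : D n x y) : D n (actB g x) (actB g y) := by
  obtain ⟨h', i, j, hf, hx, hy⟩ := h
  exact ⟨g * h', i, j, hf, by rw [hx, actB_bnd], by rw [hy, actB_bnd]⟩

def crels (n : ℕ) : Set (FreeGroup (B n)) :=
  {x | ∃ a b : B n, D n a b ∧ x = FreeGroup.of a * FreeGroup.of b * (FreeGroup.of a)⁻¹ *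
    (FreeGroup.of b)⁻¹}

/-- The graph group on bands. -/
abbrev Gam (n : ℕ) := PresentedGroup (crels n)

def cof {n : ℕ} (x : B n) : Gam n := PresentedGroup.of x

theorem cof_comm {x y : B n} (h : D n x y) : cof x * cof y = cof y * cof x := by
  have h1 : (PresentedGroup.mk (crels n)
      (FreeGroup.of x * FreeGroup.of y * (FreeGroup.of x)⁻¹ * (FreeGroup.of y)⁻¹)) = 1 :=
    (QuotientGroup.eq_one_iff _).mpr
      (Subgroup.subset_normalClosure ⟨x, y, h, rfl⟩)
  simp only [map_mul, map_inv] at h1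
  have h2 : cof x * cof y * (cof x)⁻¹ * (cof y)⁻¹ = 1 := h1
  have h3 := congrArg (fun z => z * cof y * cof x) h2
  simpa [mul_assoc] using h3

end Emb
namespace Emb

open SingTVB

variable {n : ℕ}

theorem far_symm {m : ℕ} {i j : Fin m} (h : Far i j) : Far j i := Or.symm h

@[simp] theorem faG_eq (i : Fin (n - 1)) : SingTVG.fa i = SingTVB.fa i := rfl
@[simp] theorem fbG_eq (i : Fin (n - 1)) : SingTVG.fb i = SingTVB.fb i := rfl

/- `g = 1` specializations of the band moves, as simp lemmas -/
theorem bnd_stc1 (i : Fin (n - 1)) : bnd (gs i) i = bnd (1 : G n) i := by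
  simpa using bnd_stc (1 : G n) i
theorem bnd_farS1 {i j : Fin (n - 1)} (h : Far i j) : bnd (gs i) j = bnd (1 : G n) j := by
  simpa using bnd_farS h (1 : G n)
theorem bnd_farR1 {i j : Fin (n - 1)} (h : Far i j) : bnd (gr i) j = bnd (1 : G n) j := by
  simpa using bnd_farR h (1 : G n)
theorem bnd_gc1 {i : Fin (n - 1)} {j : Fin n} (h1 : j ≠ fa i) (h2 : j ≠ fb i) :
    bnd (gc j) i = bnd (1 : G n) i := by simpa using bnd_gc h1 h2 (1 : G n)
theorem bnd_rtr1 {i j : Fin (n - 1)} (h : j.val = i.val + 1) :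
    bnd (gr i) j = bnd (gr j : G n) i := by simpa using bnd_rtr h (1 : G n)
theorem bnd_rtrg1 (i : Fin (n - 1)) :
    bnd (gr i) i = bnd (gc (fb i) * gc (fa i) : G n) i := by simpa using bnd_rtrg i (1 : G n)
theorem bnd_sst1 {i j : Fin (n - 1)} (h : j.val = i.val + 1) :
    bnd (gs i * gs j : G n) i = bnd (1 : G n) j := by simpa using bnd_sst h (1 : G n)
theorem bnd_sst'1 {i j : Fin (n - 1)} (h : j.val = i.val + 1) :
    bnd (gs j * gs i : G n) j = bnd (1 : G n) i := by simpa using bnd_sst' h (1 : G n)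

/- relations in `G n` in usable form -/
theorem G_ss {i j : Fin (n - 1)} (h : Far i j) : gs (n := n) i * gs j = gs j * gs i := by
  simpa [gs, gr, gc, mkG, map_mul] using relG_eq (RelG.ss h)
theorem G_rr {i j : Fin (n - 1)} (h : Far i j) : gr (n := n) i * gr j = gr j * gr i := by
  simpa [gs, gr, gc, mkG, map_mul] using relG_eq (RelG.rr h)
theorem G_sr {i j : Fin (n - 1)} (h : Far i j) : gs (n := n) i * gr j = gr j * gs i := by
  simpa [gs, gr, gc, mkG, map_mul] using relG_eq (RelG.sr h)
theorem G_sss {i j : Fin (n - 1)} (h : j.val = i.val + 1) :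
    gs (n := n) i * gs j * gs i = gs j * gs i * gs j := by
  simpa [gs, gr, gc, mkG, map_mul] using relG_eq (RelG.sss h)
theorem G_rrr {i j : Fin (n - 1)} (h : j.val = i.val + 1) :
    gr (n := n) i * gr j * gr i = gr j * gr i * gr j := by
  simpa [gs, gr, gc, mkG, map_mul] using relG_eq (RelG.rrr h)
theorem G_rsr {i j : Fin (n - 1)} (h : j.val = i.val + 1) :
    gr (n := n) i * gs j * gr i = gr j * gs i * gr j := by
  simpa [gs, gr, gc, mkG, map_mul] using relG_eq (RelG.rsr h)
theorem G_grel (i : Fin (n - 1)) :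
    gc (n := n) (fb i) * gr i = gr i * gc (fa i) := by
  simpa [gs, gr, gc, mkG, map_mul] using relG_eq (RelG.grel i)
theorem G_rsrg (i : Fin (n - 1)) :
    gr (n := n) i * gs i * gr i = gc (fb i) * gc (fa i) * gs i * gc (fa i) * gc (fb i) := by
  simpa [gs, gr, gc, mkG, map_mul] using relG_eq (RelG.rsrg i)
theorem G_gg (i j : Fin n) : gc (n := n) i * gc j = gc j * gc i := by
  simpa [gs, gr, gc, mkG, map_mul] using relG_eq (RelG.gg i j)
theorem G_grc {i : Fin (n - 1)} {j : Fin n} (h1 : j ≠ fa i) (h2 : j ≠ fb i) :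
    gc (n := n) j * gr i = gr i * gc j := by
  simpa [gs, gr, gc, mkG, map_mul] using relG_eq (RelG.grc h1 h2)
theorem G_sgc {i : Fin (n - 1)} {j : Fin n} (h1 : j ≠ fa i) (h2 : j ≠ fb i) :
    gs (n := n) i * gc j = gc j * gs i := by
  simpa [gs, gr, gc, mkG, map_mul] using relG_eq (RelG.sgc h1 h2)

/-! ### The action of `G n` on the graph group of bands -/

def autHom (g : G n) : Gam n →* Gam n :=
  PresentedGroup.toGroup (f := fun b => cof (actB g b)) (by
    rintro r ⟨a, b, hD, rfl⟩
    simp only [map_mul, map_inv, FreeGroup.lift_apply_of]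
    have := cof_comm (D_act g hD)
    rw [this]
    group)

@[simp] theorem autHom_cof (g : G n) (x : B n) : autHom g (cof x) = cof (actB g x) :=
  PresentedGroup.toGroup.of _

theorem autHom_comp (g h : G n) (x : Gam n) : autHom g (autHom h x) = autHom (g * h) x := by
  have : (autHom (n := n) g).comp (autHom h) = autHom (g * h) := by
    apply PresentedGroup.ext
    intro b
    show autHom g (autHom h (cof b)) = autHom (g * h) (cof b)
    simp [actB_mul]
  exact DFunLike.congr_fun this x

theorem autHom_id (x : Gam n) : autHom (1 : G n) x = x := by
  have : autHom (n := n) 1 = MonoidHom.id _ := by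
    apply PresentedGroup.ext
    intro b
    show autHom 1 (cof b) = cof b
    simp
  exact DFunLike.congr_fun this x

/-- the action as a homomorphism to `MulAut` -/
def autG (n : ℕ) : G n →* MulAut (Gam n) where
  toFun g :=
    { toFun := autHom g
      invFun := autHom g⁻¹
      left_inv := fun x => by rw [autHom_comp, inv_mul_cancel, autHom_id]
      right_inv := fun x => by rw [autHom_comp, mul_inv_cancel, autHom_id]
      map_mul' := map_mul _ }
  map_one' := by
    ext x
    exact autHom_id x
  map_mul' g h := by
    ext x
    exact (autHom_comp g h x).symm

@[simp] theorem autG_cof (g : G n) (x : B n) : autG n g (cof x) = cof (actB g x) :=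
  autHom_cof g x

/-- the receiving group -/
abbrev K (n : ℕ) := Gam n ⋊[autG n] G n

end Emb
namespace Emb

open SingTVB SemidirectProduct

variable {n : ℕ}

/-- generator images in `K n` -/
def fPhi : SingTVG.GGen n → K n
  | .sig i => inr (gs i)
  | .rho i => inr (gr i)
  | .tau i => inl (cof (bnd 1 i))
  | .taub i => (inl (cof (bnd 1 i)))⁻¹
  | .gam j => inr (gc j)

theorem gc_cancel (j : Fin n) (x : G n) : gc j * (gc j * x) = x := by
  rw [← mul_assoc, gc_sq, one_mul]
theorem gr_cancel (i : Fin (n - 1)) (x : G n) : gr i * (gr i * x) = x := by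
  rw [← mul_assoc, gr_sq, one_mul]

theorem D_tt {i j : Fin (n - 1)} (h : Far i j) : D n (bnd 1 i) (bnd 1 j) :=
  ⟨1, i, j, h, rfl, rfl⟩

theorem hPhi : ∀ r ∈ SingTVG.grels n, FreeGroup.lift (fPhi (n := n)) r = 1 := by
  rintro r ⟨u, v, hrel, rfl⟩
  rw [map_mul, map_inv, mul_inv_eq_one]
  induction hrel with
  | ss h =>
      simp only [SingTVG.ws, map_mul, FreeGroup.lift_apply_of, fPhi]
      apply SemidirectProduct.ext <;> simp [G_ss h]
  | rr h =>
      simp only [SingTVG.wr, map_mul, FreeGroup.lift_apply_of, fPhi]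
      apply SemidirectProduct.ext <;> simp [G_rr h]
  | sr h =>
      simp only [SingTVG.ws, SingTVG.wr, map_mul, FreeGroup.lift_apply_of, fPhi]
      apply SemidirectProduct.ext <;> simp [G_sr h]
  | tt h =>
      simp only [SingTVG.wt, map_mul, FreeGroup.lift_apply_of, fPhi]
      apply SemidirectProduct.ext <;> simp [cof_comm (D_tt h)]
  | st h =>
      simp only [SingTVG.ws, SingTVG.wt, map_mul, FreeGroup.lift_apply_of, fPhi]
      apply SemidirectProduct.ext <;> simp [bnd_farS1 h]
  | tr h =>
      simp only [SingTVG.wt, SingTVG.wr, map_mul, FreeGroup.lift_apply_of, fPhi]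
      apply SemidirectProduct.ext <;> simp [bnd_farR1 (far_symm h)]
  | @tbtb i j h =>
      simp only [SingTVG.wtb, map_mul, FreeGroup.lift_apply_of, fPhi]
      have hc : Commute (cof (bnd 1 i) : Gam n) (cof (bnd 1 j)) := cof_comm (D_tt h)
      apply SemidirectProduct.ext
      · simpa using hc.inv_left.inv_right.eq
      · simp
  | @tbt i j h =>
      simp only [SingTVG.wtb, SingTVG.wt, map_mul, FreeGroup.lift_apply_of, fPhi]
      have hc : Commute (cof (bnd 1 i) : Gam n) (cof (bnd 1 j)) := cof_comm (D_tt h)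
      apply SemidirectProduct.ext
      · simpa using hc.inv_left.eq
      · simp
  | stb h =>
      simp only [SingTVG.ws, SingTVG.wtb, map_mul, FreeGroup.lift_apply_of, fPhi]
      apply SemidirectProduct.ext <;> simp [bnd_farS1 h]
  | tbr h =>
      simp only [SingTVG.wtb, SingTVG.wr, map_mul, FreeGroup.lift_apply_of, fPhi]
      apply SemidirectProduct.ext <;> simp [bnd_farR1 (far_symm h)]
  | sss h =>
      simp only [SingTVG.ws, map_mul, FreeGroup.lift_apply_of, fPhi]
      apply SemidirectProduct.ext <;> simp [G_sss h]
  | rrr h =>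
      simp only [SingTVG.wr, map_mul, FreeGroup.lift_apply_of, fPhi]
      apply SemidirectProduct.ext <;> simp [G_rrr h]
  | rsr h =>
      simp only [SingTVG.wr, SingTVG.ws, map_mul, FreeGroup.lift_apply_of, fPhi]
      apply SemidirectProduct.ext <;> simp [G_rsr h]
  | rtr h =>
      simp only [SingTVG.wr, SingTVG.wt, map_mul, FreeGroup.lift_apply_of, fPhi]
      apply SemidirectProduct.ext <;> simp [bnd_rtr1 h, gr_sq]
  | rtbr h =>
      simp only [SingTVG.wr, SingTVG.wtb, map_mul, FreeGroup.lift_apply_of, fPhi]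
      apply SemidirectProduct.ext <;> simp [bnd_rtr1 h, gr_sq]
  | sst h =>
      simp only [SingTVG.ws, SingTVG.wt, map_mul, FreeGroup.lift_apply_of, fPhi]
      apply SemidirectProduct.ext <;> simp [bnd_sst1 h, mul_assoc]
  | sst' h =>
      simp only [SingTVG.ws, SingTVG.wt, map_mul, FreeGroup.lift_apply_of, fPhi]
      apply SemidirectProduct.ext <;> simp [bnd_sst'1 h, mul_assoc]
  | sstb h =>
      simp only [SingTVG.ws, SingTVG.wtb, map_mul, FreeGroup.lift_apply_of, fPhi]
      apply SemidirectProduct.ext <;> simp [bnd_sst1 h, mul_assoc]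
  | sstb' h =>
      simp only [SingTVG.ws, SingTVG.wtb, map_mul, FreeGroup.lift_apply_of, fPhi]
      apply SemidirectProduct.ext <;> simp [bnd_sst'1 h, mul_assoc]
  | rho2 i =>
      simp only [SingTVG.wr, map_mul, FreeGroup.lift_apply_of, fPhi]
      apply SemidirectProduct.ext <;> simp [gr_sq]
  | stc i =>
      simp only [SingTVG.ws, SingTVG.wt, map_mul, FreeGroup.lift_apply_of, fPhi]
      apply SemidirectProduct.ext <;> simp [bnd_stc1]
  | stbc i =>
      simp only [SingTVG.ws, SingTVG.wtb, map_mul, FreeGroup.lift_apply_of, fPhi]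
      apply SemidirectProduct.ext <;> simp [bnd_stc1]
  | grel i =>
      simp only [SingTVG.wg, SingTVG.wr, map_mul, FreeGroup.lift_apply_of, fPhi]
      apply SemidirectProduct.ext <;> simp [G_grel i]
  | rsrg i =>
      simp only [SingTVG.wr, SingTVG.ws, SingTVG.wg, map_mul, FreeGroup.lift_apply_of, fPhi]
      apply SemidirectProduct.ext <;> simp [G_rsrg i]
  | rtrg i =>
      simp only [SingTVG.wr, SingTVG.wt, SingTVG.wg, map_mul, FreeGroup.lift_apply_of, fPhi]
      apply SemidirectProduct.ext <;> simp [bnd_rtrg1, gr_sq, gc_sq, gc_cancel, mul_assoc]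
  | rtbrg i =>
      simp only [SingTVG.wr, SingTVG.wtb, SingTVG.wg, map_mul, FreeGroup.lift_apply_of, fPhi]
      apply SemidirectProduct.ext <;> simp [bnd_rtrg1, gr_sq, gc_sq, gc_cancel, mul_assoc]
  | tbt1 i =>
      simp only [SingTVG.wtb, SingTVG.wt, map_mul, FreeGroup.lift_apply_of, fPhi]
      simp
  | g2 j =>
      simp only [SingTVG.wg, map_mul, FreeGroup.lift_apply_of, fPhi]
      apply SemidirectProduct.ext <;> simp [gc_sq]
  | ggc i j =>
      simp only [SingTVG.wg, map_mul, FreeGroup.lift_apply_of, fPhi]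
      apply SemidirectProduct.ext <;> simp [G_gg i j]
  | grc h1 h2 =>
      simp only [SingTVG.wg, SingTVG.wr, map_mul, FreeGroup.lift_apply_of, fPhi]
      apply SemidirectProduct.ext <;> simp [G_grc h1 h2]
  | sgc h1 h2 =>
      simp only [SingTVG.ws, SingTVG.wg, map_mul, FreeGroup.lift_apply_of, fPhi]
      apply SemidirectProduct.ext <;> simp [G_sgc h1 h2]
  | tgc h1 h2 =>
      simp only [SingTVG.wt, SingTVG.wg, map_mul, FreeGroup.lift_apply_of, fPhi]
      apply SemidirectProduct.ext <;> simp [bnd_gc1 h1 h2]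
  | tbgc h1 h2 =>
      simp only [SingTVG.wtb, SingTVG.wg, map_mul, FreeGroup.lift_apply_of, fPhi]
      apply SemidirectProduct.ext <;> simp [bnd_gc1 h1 h2]

/-- The group homomorphism `STVG n → K n`. -/
def Phi (n : ℕ) : SingTVG.STVG n →* K n := PresentedGroup.toGroup hPhi

end Emb
namespace Emb

open SingTVB SemidirectProduct

variable {n : ℕ}

/-! ### The canonical map `Ψ : STVB n → STVG n` -/

def mkVG (n : ℕ) : SingTVG.FG n →* SingTVG.STVG n := PresentedGroup.mk (SingTVG.grels n)

theorem grel_eq {u v : SingTVG.FG n} (h : SingTVG.GRel n u v) : mkVG n u = mkVG n v := by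
  have h1 : (mkVG n (u * v⁻¹)) = 1 := by
    apply (QuotientGroup.eq_one_iff _).mpr
    exact Subgroup.subset_normalClosure ⟨u, v, h, rfl⟩
  rw [map_mul, map_inv] at h1
  exact (mul_inv_eq_one.mp h1)

def fPsi : Gen n → SingTVG.STVG n
  | .sig i => SingTVG.sigG n i
  | .sigb i => (SingTVG.sigG n i)⁻¹
  | .rho i => SingTVG.rhoG n i
  | .tau i => SingTVG.tauG n i
  | .gam j => SingTVG.gamG n j

theorem hPsi : ∀ a b : FM n, Rel n a b →
    FreeMonoid.lift (fPsi (n := n)) a = FreeMonoid.lift (fPsi (n := n)) b := by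
  intro a b hrel
  induction hrel with
  | ss h =>
      simp only [Ws, map_mul, FreeMonoid.lift_eval_of, fPsi]
      simpa [SingTVG.sigG, SingTVG.rhoG, SingTVG.tauG, SingTVG.gamG, PresentedGroup.of, mkVG, SingTVG.ws, map_mul] using grel_eq (SingTVG.GRel.ss (n := n) h)
  | rr h =>
      simp only [Wr, map_mul, FreeMonoid.lift_eval_of, fPsi]
      simpa [SingTVG.sigG, SingTVG.rhoG, SingTVG.tauG, SingTVG.gamG, PresentedGroup.of, mkVG, SingTVG.wr, map_mul] using grel_eq (SingTVG.GRel.rr (n := n) h)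
  | sr h =>
      simp only [Ws, Wr, map_mul, FreeMonoid.lift_eval_of, fPsi]
      simpa [SingTVG.sigG, SingTVG.rhoG, SingTVG.tauG, SingTVG.gamG, PresentedGroup.of, mkVG, SingTVG.ws, SingTVG.wr, map_mul] using grel_eq (SingTVG.GRel.sr (n := n) h)
  | tt h =>
      simp only [Wt, map_mul, FreeMonoid.lift_eval_of, fPsi]
      simpa [SingTVG.sigG, SingTVG.rhoG, SingTVG.tauG, SingTVG.gamG, PresentedGroup.of, mkVG, SingTVG.wt, map_mul] using grel_eq (SingTVG.GRel.tt (n := n) h)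
  | st h =>
      simp only [Ws, Wt, map_mul, FreeMonoid.lift_eval_of, fPsi]
      simpa [SingTVG.sigG, SingTVG.rhoG, SingTVG.tauG, SingTVG.gamG, PresentedGroup.of, mkVG, SingTVG.ws, SingTVG.wt, map_mul] using grel_eq (SingTVG.GRel.st (n := n) h)
  | tr h =>
      simp only [Wt, Wr, map_mul, FreeMonoid.lift_eval_of, fPsi]
      simpa [SingTVG.sigG, SingTVG.rhoG, SingTVG.tauG, SingTVG.gamG, PresentedGroup.of, mkVG, SingTVG.wt, SingTVG.wr, map_mul] using grel_eq (SingTVG.GRel.tr (n := n) h)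
  | sss h =>
      simp only [Ws, map_mul, FreeMonoid.lift_eval_of, fPsi]
      simpa [SingTVG.sigG, SingTVG.rhoG, SingTVG.tauG, SingTVG.gamG, PresentedGroup.of, mkVG, SingTVG.ws, map_mul] using grel_eq (SingTVG.GRel.sss (n := n) h)
  | rrr h =>
      simp only [Wr, map_mul, FreeMonoid.lift_eval_of, fPsi]
      simpa [SingTVG.sigG, SingTVG.rhoG, SingTVG.tauG, SingTVG.gamG, PresentedGroup.of, mkVG, SingTVG.wr, map_mul] using grel_eq (SingTVG.GRel.rrr (n := n) h)
  | rsr h =>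
      simp only [Wr, Ws, map_mul, FreeMonoid.lift_eval_of, fPsi]
      simpa [SingTVG.sigG, SingTVG.rhoG, SingTVG.tauG, SingTVG.gamG, PresentedGroup.of, mkVG, SingTVG.wr, SingTVG.ws, map_mul] using grel_eq (SingTVG.GRel.rsr (n := n) h)
  | rtr h =>
      simp only [Wr, Wt, map_mul, FreeMonoid.lift_eval_of, fPsi]
      simpa [SingTVG.sigG, SingTVG.rhoG, SingTVG.tauG, SingTVG.gamG, PresentedGroup.of, mkVG, SingTVG.wr, SingTVG.wt, map_mul] using grel_eq (SingTVG.GRel.rtr (n := n) h)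
  | sst h =>
      simp only [Ws, Wt, map_mul, FreeMonoid.lift_eval_of, fPsi]
      simpa [SingTVG.sigG, SingTVG.rhoG, SingTVG.tauG, SingTVG.gamG, PresentedGroup.of, mkVG, SingTVG.ws, SingTVG.wt, map_mul] using grel_eq (SingTVG.GRel.sst (n := n) h)
  | sst' h =>
      simp only [Ws, Wt, map_mul, FreeMonoid.lift_eval_of, fPsi]
      simpa [SingTVG.sigG, SingTVG.rhoG, SingTVG.tauG, SingTVG.gamG, PresentedGroup.of, mkVG, SingTVG.ws, SingTVG.wt, map_mul] using grel_eq (SingTVG.GRel.sst' (n := n) h)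
  | rho2 i =>
      simp only [Wr, map_mul, map_one, FreeMonoid.lift_eval_of, fPsi]
      simpa [SingTVG.sigG, SingTVG.rhoG, SingTVG.tauG, SingTVG.gamG, PresentedGroup.of, mkVG, SingTVG.wr, map_mul] using grel_eq (SingTVG.GRel.rho2 (n := n) i)
  | ssb i =>
      simp only [Ws, Wsb, map_mul, map_one, FreeMonoid.lift_eval_of, fPsi]
      exact mul_inv_cancel _
  | sbs i =>
      simp only [Ws, Wsb, map_mul, map_one, FreeMonoid.lift_eval_of, fPsi]
      exact inv_mul_cancel _
  | stc i =>
      simp only [Ws, Wt, map_mul, FreeMonoid.lift_eval_of, fPsi]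
      simpa [SingTVG.sigG, SingTVG.rhoG, SingTVG.tauG, SingTVG.gamG, PresentedGroup.of, mkVG, SingTVG.ws, SingTVG.wt, map_mul] using grel_eq (SingTVG.GRel.stc (n := n) i)
  | grel i =>
      simp only [Wg, Wr, map_mul, FreeMonoid.lift_eval_of, fPsi]
      simpa [SingTVG.sigG, SingTVG.rhoG, SingTVG.tauG, SingTVG.gamG, PresentedGroup.of, mkVG, SingTVG.wg, SingTVG.wr, map_mul] using grel_eq (SingTVG.GRel.grel (n := n) i)
  | rsrg i =>
      simp only [Wr, Ws, Wg, map_mul, FreeMonoid.lift_eval_of, fPsi]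
      simpa [SingTVG.sigG, SingTVG.rhoG, SingTVG.tauG, SingTVG.gamG, PresentedGroup.of, mkVG, SingTVG.wr, SingTVG.ws, SingTVG.wg, map_mul] using
        grel_eq (SingTVG.GRel.rsrg (n := n) i)
  | rtrg i =>
      simp only [Wr, Wt, Wg, map_mul, FreeMonoid.lift_eval_of, fPsi]
      simpa [SingTVG.sigG, SingTVG.rhoG, SingTVG.tauG, SingTVG.gamG, PresentedGroup.of, mkVG, SingTVG.wr, SingTVG.wt, SingTVG.wg, map_mul] using
        grel_eq (SingTVG.GRel.rtrg (n := n) i)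
  | g2 j =>
      simp only [Wg, map_mul, map_one, FreeMonoid.lift_eval_of, fPsi]
      simpa [SingTVG.sigG, SingTVG.rhoG, SingTVG.tauG, SingTVG.gamG, PresentedGroup.of, mkVG, SingTVG.wg, map_mul] using grel_eq (SingTVG.GRel.g2 (n := n) j)
  | gg i j =>
      simp only [Wg, map_mul, FreeMonoid.lift_eval_of, fPsi]
      simpa [SingTVG.sigG, SingTVG.rhoG, SingTVG.tauG, SingTVG.gamG, PresentedGroup.of, mkVG, SingTVG.wg, map_mul] using grel_eq (SingTVG.GRel.ggc (n := n) i j)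
  | grc h1 h2 =>
      simp only [Wg, Wr, map_mul, FreeMonoid.lift_eval_of, fPsi]
      simpa [SingTVG.sigG, SingTVG.rhoG, SingTVG.tauG, SingTVG.gamG, PresentedGroup.of, mkVG, SingTVG.wg, SingTVG.wr, map_mul] using grel_eq (SingTVG.GRel.grc (n := n) h1 h2)
  | sgc h1 h2 =>
      simp only [Ws, Wg, map_mul, FreeMonoid.lift_eval_of, fPsi]
      simpa [SingTVG.sigG, SingTVG.rhoG, SingTVG.tauG, SingTVG.gamG, PresentedGroup.of, mkVG, SingTVG.ws, SingTVG.wg, map_mul] using grel_eq (SingTVG.GRel.sgc (n := n) h1 h2)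
  | tgc h1 h2 =>
      simp only [Wt, Wg, map_mul, FreeMonoid.lift_eval_of, fPsi]
      simpa [SingTVG.sigG, SingTVG.rhoG, SingTVG.tauG, SingTVG.gamG, PresentedGroup.of, mkVG, SingTVG.wt, SingTVG.wg, map_mul] using grel_eq (SingTVG.GRel.tgc (n := n) h1 h2)

/-- The canonical monoid homomorphism `STVB n → STVG n`. -/
def Psi (n : ℕ) : STVB n →* SingTVG.STVG n := PresentedMonoid.lift (fPsi (n := n)) hPsi

end Emb
namespace Emb

open SingTVB SemidirectProduct

variable {n : ℕ}

theorem relM {u v : FM n} (h : Rel n u v) : mkS n u = mkS n v :=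
  Quotient.sound (ConGen.Rel.of u v h)

/- relations in `STVB n` -/
theorem S_ssb (i : Fin (n - 1)) : sigE n i * sigbE n i = 1 := by
  simpa [sigE, sigbE, map_mul] using relM (Rel.ssb i)
theorem S_sbs (i : Fin (n - 1)) : sigbE n i * sigE n i = 1 := by
  simpa [sigE, sigbE, map_mul] using relM (Rel.sbs i)
theorem S_rho2 (i : Fin (n - 1)) : rhoE n i * rhoE n i = 1 := by
  simpa [rhoE, map_mul] using relM (Rel.rho2 i)
theorem S_g2 (j : Fin n) : gamE n j * gamE n j = 1 := by
  simpa [gamE, map_mul] using relM (Rel.g2 j)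
theorem S_stc (i : Fin (n - 1)) : sigE n i * tauE n i = tauE n i * sigE n i := by
  simpa [sigE, tauE, map_mul] using relM (Rel.stc i)
theorem S_st {i j : Fin (n - 1)} (h : Far i j) :
    sigE n i * tauE n j = tauE n j * sigE n i := by
  simpa [sigE, tauE, map_mul] using relM (Rel.st h)
theorem S_tr {i j : Fin (n - 1)} (h : Far i j) :
    tauE n i * rhoE n j = rhoE n j * tauE n i := by
  simpa [rhoE, tauE, map_mul] using relM (Rel.tr h)
theorem S_tt {i j : Fin (n - 1)} (h : Far i j) :
    tauE n i * tauE n j = tauE n j * tauE n i := by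
  simpa [tauE, map_mul] using relM (Rel.tt h)
theorem S_ss {i j : Fin (n - 1)} (h : Far i j) :
    sigE n i * sigE n j = sigE n j * sigE n i := by
  simpa [sigE, map_mul] using relM (Rel.ss h)
theorem S_rr {i j : Fin (n - 1)} (h : Far i j) :
    rhoE n i * rhoE n j = rhoE n j * rhoE n i := by
  simpa [rhoE, map_mul] using relM (Rel.rr h)
theorem S_sr {i j : Fin (n - 1)} (h : Far i j) :
    sigE n i * rhoE n j = rhoE n j * sigE n i := by
  simpa [sigE, rhoE, map_mul] using relM (Rel.sr h)
theorem S_sss {i j : Fin (n - 1)} (h : j.val = i.val + 1) :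
    sigE n i * sigE n j * sigE n i = sigE n j * sigE n i * sigE n j := by
  simpa [sigE, map_mul] using relM (Rel.sss h)
theorem S_rrr {i j : Fin (n - 1)} (h : j.val = i.val + 1) :
    rhoE n i * rhoE n j * rhoE n i = rhoE n j * rhoE n i * rhoE n j := by
  simpa [rhoE, map_mul] using relM (Rel.rrr h)
theorem S_rsr {i j : Fin (n - 1)} (h : j.val = i.val + 1) :
    rhoE n i * sigE n j * rhoE n i = rhoE n j * sigE n i * rhoE n j := by
  simpa [rhoE, sigE, map_mul] using relM (Rel.rsr h)
theorem S_rtr {i j : Fin (n - 1)} (h : j.val = i.val + 1) :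
    rhoE n i * tauE n j * rhoE n i = rhoE n j * tauE n i * rhoE n j := by
  simpa [rhoE, tauE, map_mul] using relM (Rel.rtr h)
theorem S_sst {i j : Fin (n - 1)} (h : j.val = i.val + 1) :
    sigE n i * sigE n j * tauE n i = tauE n j * sigE n i * sigE n j := by
  simpa [sigE, tauE, map_mul] using relM (Rel.sst h)
theorem S_sst' {i j : Fin (n - 1)} (h : j.val = i.val + 1) :
    sigE n j * sigE n i * tauE n j = tauE n i * sigE n j * sigE n i := by
  simpa [sigE, tauE, map_mul] using relM (Rel.sst' h)
theorem S_grel (i : Fin (n - 1)) :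
    gamE n (fb i) * rhoE n i = rhoE n i * gamE n (fa i) := by
  simpa [gamE, rhoE, map_mul] using relM (Rel.grel i)
theorem S_rsrg (i : Fin (n - 1)) :
    rhoE n i * sigE n i * rhoE n i
      = gamE n (fb i) * gamE n (fa i) * sigE n i * gamE n (fa i) * gamE n (fb i) := by
  simpa [rhoE, sigE, gamE, map_mul] using relM (Rel.rsrg i)
theorem S_rtrg (i : Fin (n - 1)) :
    rhoE n i * tauE n i * rhoE n i
      = gamE n (fb i) * gamE n (fa i) * tauE n i * gamE n (fa i) * gamE n (fb i) := by
  simpa [rhoE, tauE, gamE, map_mul] using relM (Rel.rtrg i)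
theorem S_gg (i j : Fin n) : gamE n i * gamE n j = gamE n j * gamE n i := by
  simpa [gamE, map_mul] using relM (Rel.gg i j)
theorem S_grc {i : Fin (n - 1)} {j : Fin n} (h1 : j ≠ fa i) (h2 : j ≠ fb i) :
    gamE n j * rhoE n i = rhoE n i * gamE n j := by
  simpa [gamE, rhoE, map_mul] using relM (Rel.grc h1 h2)
theorem S_sgc {i : Fin (n - 1)} {j : Fin n} (h1 : j ≠ fa i) (h2 : j ≠ fb i) :
    sigE n i * gamE n j = gamE n j * sigE n i := by
  simpa [sigE, gamE, map_mul] using relM (Rel.sgc h1 h2)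
theorem S_tgc {i : Fin (n - 1)} {j : Fin n} (h1 : j ≠ fa i) (h2 : j ≠ fb i) :
    tauE n i * gamE n j = gamE n j * tauE n i := by
  simpa [tauE, gamE, map_mul] using relM (Rel.tgc h1 h2)

/-! ### units of `STVB n` and the homomorphism `ι : G n → (STVB n)ˣ` -/

def uS (i : Fin (n - 1)) : (STVB n)ˣ := ⟨sigE n i, sigbE n i, S_ssb i, S_sbs i⟩
def uR (i : Fin (n - 1)) : (STVB n)ˣ := ⟨rhoE n i, rhoE n i, S_rho2 i, S_rho2 i⟩
def uC (j : Fin n) : (STVB n)ˣ := ⟨gamE n j, gamE n j, S_g2 j, S_g2 j⟩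

def fIota : GenG n → (STVB n)ˣ
  | .s i => uS i
  | .r i => uR i
  | .c j => uC j

theorem hIota : ∀ r ∈ relsG n, FreeGroup.lift (fIota (n := n)) r = 1 := by
  rintro r ⟨u, v, hrel, rfl⟩
  rw [map_mul, map_inv, mul_inv_eq_one]
  induction hrel with
  | ss h =>
      apply Units.ext
      simp only [es, map_mul, FreeGroup.lift_apply_of, fIota, Units.val_mul, uS]
      exact S_ss h
  | rr h =>
      apply Units.ext
      simp only [er, map_mul, FreeGroup.lift_apply_of, fIota, Units.val_mul, uR]
      exact S_rr h
  | sr h =>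
      apply Units.ext
      simp only [es, er, map_mul, FreeGroup.lift_apply_of, fIota, Units.val_mul, uS, uR]
      exact S_sr h
  | sss h =>
      apply Units.ext
      simp only [es, map_mul, FreeGroup.lift_apply_of, fIota, Units.val_mul, uS]
      exact S_sss h
  | rrr h =>
      apply Units.ext
      simp only [er, map_mul, FreeGroup.lift_apply_of, fIota, Units.val_mul, uR]
      exact S_rrr h
  | rsr h =>
      apply Units.ext
      simp only [er, es, map_mul, FreeGroup.lift_apply_of, fIota, Units.val_mul, uR, uS]
      exact S_rsr h
  | rho2 i =>
      apply Units.ext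
      simp only [er, map_mul, map_one, FreeGroup.lift_apply_of, fIota, Units.val_mul, uR,
        Units.val_one]
      exact S_rho2 i
  | grel i =>
      apply Units.ext
      simp only [ec, er, map_mul, FreeGroup.lift_apply_of, fIota, Units.val_mul, uC, uR]
      exact S_grel i
  | rsrg i =>
      apply Units.ext
      simp only [er, es, ec, map_mul, FreeGroup.lift_apply_of, fIota, Units.val_mul, uR, uS, uC]
      exact S_rsrg i
  | g2 j =>
      apply Units.ext
      simp only [ec, map_mul, map_one, FreeGroup.lift_apply_of, fIota, Units.val_mul, uC,
        Units.val_one]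
      exact S_g2 j
  | gg i j =>
      apply Units.ext
      simp only [ec, map_mul, FreeGroup.lift_apply_of, fIota, Units.val_mul, uC]
      exact S_gg i j
  | grc h1 h2 =>
      apply Units.ext
      simp only [ec, er, map_mul, FreeGroup.lift_apply_of, fIota, Units.val_mul, uC, uR]
      exact S_grc h1 h2
  | sgc h1 h2 =>
      apply Units.ext
      simp only [es, ec, map_mul, FreeGroup.lift_apply_of, fIota, Units.val_mul, uS, uC]
      exact S_sgc h1 h2

def iota (n : ℕ) : G n →* (STVB n)ˣ := PresentedGroup.toGroup (hIota (n := n))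

/-- `ι` followed by the coercion to `STVB n` -/
def im (n : ℕ) : G n →* STVB n := (Units.coeHom _).comp (iota n)

@[simp] theorem iota_gs (i : Fin (n - 1)) : iota n (gs i) = uS i :=
  PresentedGroup.toGroup.of _
@[simp] theorem iota_gr (i : Fin (n - 1)) : iota n (gr i) = uR i :=
  PresentedGroup.toGroup.of _
@[simp] theorem iota_gc (j : Fin n) : iota n (gc j) = uC j :=
  PresentedGroup.toGroup.of _

@[simp] theorem im_gs (i : Fin (n - 1)) : im n (gs i) = sigE n i := by
  simp [im]; rfl
@[simp] theorem im_gr (i : Fin (n - 1)) : im n (gr i) = rhoE n i := by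
  simp [im]; rfl
@[simp] theorem im_gc (j : Fin n) : im n (gc j) = gamE n j := by
  simp [im]; rfl
@[simp] theorem im_gs_inv (i : Fin (n - 1)) : im n (gs i)⁻¹ = sigbE n i := by
  simp [im, map_inv]; rfl
@[simp] theorem im_gr_inv (i : Fin (n - 1)) : im n (gr i)⁻¹ = rhoE n i := by
  simp [im, map_inv]; rfl
@[simp] theorem im_gc_inv (j : Fin n) : im n (gc j)⁻¹ = gamE n j := by
  simp [im, map_inv]; rfl

theorem im_cancel (g : G n) (x : STVB n) : im n g * (im n g⁻¹ * x) = x := by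
  rw [← mul_assoc, ← map_mul, mul_inv_cancel, map_one, one_mul]
theorem im_cancel' (g : G n) (x : STVB n) : im n g⁻¹ * (im n g * x) = x := by
  rw [← mul_assoc, ← map_mul, inv_mul_cancel, map_one, one_mul]

end Emb
namespace Emb

open SingTVB SemidirectProduct

variable {n : ℕ}

theorem swap_left {M : Type*} [Monoid M] {a b : M} (h : a * b = b * a) (x : M) :
    a * (b * x) = b * (a * x) := by rw [← mul_assoc, h, mul_assoc]

theorem sig_cancel (i : Fin (n - 1)) (x : STVB n) : sigE n i * (sigbE n i * x) = x := by
  rw [← mul_assoc, S_ssb, one_mul]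
theorem sigb_cancel (i : Fin (n - 1)) (x : STVB n) : sigbE n i * (sigE n i * x) = x := by
  rw [← mul_assoc, S_sbs, one_mul]
theorem rho_cancel (i : Fin (n - 1)) (x : STVB n) : rhoE n i * (rhoE n i * x) = x := by
  rw [← mul_assoc, S_rho2, one_mul]
theorem gam_cancel (j : Fin n) (x : STVB n) : gamE n j * (gamE n j * x) = x := by
  rw [← mul_assoc, S_g2, one_mul]

theorem innS (i : Fin (n - 1)) (x : STVB n) :
    sigE n i * (tauE n i * (sigbE n i * x)) = tauE n i * x := by
  rw [swap_left (S_stc i), sig_cancel]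
theorem innSf {i j : Fin (n - 1)} (h : Far i j) (x : STVB n) :
    sigE n i * (tauE n j * (sigbE n i * x)) = tauE n j * x := by
  rw [swap_left (S_st h), sig_cancel]
theorem innR {i j : Fin (n - 1)} (h : Far i j) (x : STVB n) :
    rhoE n i * (tauE n j * (rhoE n i * x)) = tauE n j * x := by
  rw [swap_left (S_tr (far_symm h)).symm, rho_cancel]
theorem innG {i : Fin (n - 1)} {j : Fin n} (h1 : j ≠ fa i) (h2 : j ≠ fb i) (x : STVB n) :
    gamE n j * (tauE n i * (gamE n j * x)) = tauE n i * x := by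
  rw [swap_left (S_tgc h1 h2).symm, gam_cancel]
theorem innRTR {i j : Fin (n - 1)} (h : j.val = i.val + 1) (x : STVB n) :
    rhoE n i * (tauE n j * (rhoE n i * x)) = rhoE n j * (tauE n i * (rhoE n j * x)) := by
  simp only [← mul_assoc]
  rw [S_rtr h]
theorem innRTRG (i : Fin (n - 1)) (x : STVB n) :
    rhoE n i * (tauE n i * (rhoE n i * x))
      = gamE n (fb i) * (gamE n (fa i) * (tauE n i * (gamE n (fa i) * (gamE n (fb i) * x)))) := by
  simp only [← mul_assoc]
  rw [S_rtrg i]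
theorem innSST {i j : Fin (n - 1)} (h : j.val = i.val + 1) (x : STVB n) :
    sigE n i * (sigE n j * (tauE n i * (sigbE n j * (sigbE n i * x)))) = tauE n j * x := by
  simp only [← mul_assoc]
  rw [S_sst h]
  simp only [mul_assoc]
  rw [sig_cancel, sig_cancel]
theorem innSST' {i j : Fin (n - 1)} (h : j.val = i.val + 1) (x : STVB n) :
    sigE n j * (sigE n i * (tauE n j * (sigbE n i * (sigbE n j * x)))) = tauE n i * x := by
  simp only [← mul_assoc]
  rw [S_sst' h]
  simp only [mul_assoc]
  rw [sig_cancel, sig_cancel]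

/-- the band elements in `STVB n` -/
def T : B n → STVB n :=
  Quotient.lift (fun p : G n × Fin (n - 1) => im n p.1 * tauE n p.2 * im n p.1⁻¹) (by
    have key : ∀ p q, Mv n p q →
        im n p.1 * tauE n p.2 * im n p.1⁻¹ = im n q.1 * tauE n q.2 * im n q.1⁻¹ := by
      intro p q hm
      cases hm with
      | mstc i g =>
          simp only [map_mul, mul_inv_rev, im_gs, im_gs_inv, mul_assoc]
          rw [innS]
      | mfarS h g =>
          simp only [map_mul, mul_inv_rev, im_gs, im_gs_inv, mul_assoc]
          rw [innSf h]
      | mfarR h g =>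
          simp only [map_mul, mul_inv_rev, im_gr, im_gr_inv, mul_assoc]
          rw [innR h]
      | mgc h1 h2 g =>
          simp only [map_mul, mul_inv_rev, im_gc, im_gc_inv, mul_assoc]
          rw [innG h1 h2]
      | mrtr h g =>
          simp only [map_mul, mul_inv_rev, im_gr, im_gr_inv, mul_assoc]
          rw [innRTR h]
      | mrtrg i g =>
          simp only [map_mul, mul_inv_rev, im_gr, im_gr_inv, im_gc, im_gc_inv, mul_assoc]
          rw [innRTRG i]
      | msst h g =>
          simp only [map_mul, mul_inv_rev, im_gs, im_gs_inv, mul_assoc]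
          rw [innSST h]
      | msst' h g =>
          simp only [map_mul, mul_inv_rev, im_gs, im_gs_inv, mul_assoc]
          rw [innSST' h]
    intro p q h
    induction h with
    | rel x y h => exact key x y h
    | refl x => rfl
    | symm x y _ ih => exact ih.symm
    | trans x y z _ _ ih1 ih2 => exact ih1.trans ih2)

@[simp] theorem T_bnd (g : G n) (i : Fin (n - 1)) :
    T (bnd g i) = im n g * tauE n i * im n g⁻¹ := rfl

end Emb
namespace Emb

open SingTVB SemidirectProduct

variable {n : ℕ}

/-! ### traces of bands in `STVB n` -/

def indB (n : ℕ) : B n → B n → Prop := fun x y => D n x y ∨ D n y x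

theorem indB_symm : ∀ x y : B n, indB n x y → indB n y x := fun _ _ => Or.symm

theorem T_comm_of_D {x y : B n} (h : D n x y) : T x * T y = T y * T x := by
  obtain ⟨g, i, j, hf, rfl, rfl⟩ := h
  simp only [T_bnd, mul_assoc]
  rw [im_cancel', im_cancel', swap_left (S_tt hf)]

theorem T_comm {x y : B n} (h : indB n x y) : T x * T y = T y * T x := by
  rcases h with h | h
  · exact T_comm_of_D h
  · exact (T_comm_of_D h).symm

def TProd (L : List (B n)) : STVB n := (L.map T).prod

theorem TProd_trace {L M : List (B n)} (h : TraceAux.TraceRel (indB n) L M) :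
    TProd L = TProd M := by
  induction h with
  | refl => rfl
  | tail _ hstep ih =>
      obtain ⟨p, s, a, b, hi, h1, h2⟩ := hstep
      rw [ih, h1, h2]
      simp only [TProd, List.map_append, List.prod_append, List.map_cons, List.prod_cons]
      rw [swap_left (T_comm hi)]

/-! ### the word-level data -/

def fg : Gen n → G n
  | .sig i => gs i
  | .sigb i => (gs i)⁻¹
  | .rho i => gr i
  | .tau _ => 1
  | .gam j => gc j

def piH (n : ℕ) : FM n →* G n := FreeMonoid.lift (fg (n := n))

def beta : List (Gen n) → G n → List (B n)
  | [], _ => []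
  | e :: l, g => (match e with | .tau i => [bnd g i] | _ => []) ++ beta l (g * fg e)

theorem beta_nil (g : G n) : beta [] g = [] := rfl
theorem beta_sig (i : Fin (n - 1)) (l : List (Gen n)) (g : G n) :
    beta (Gen.sig i :: l) g = beta l (g * gs i) := rfl
theorem beta_sigb (i : Fin (n - 1)) (l : List (Gen n)) (g : G n) :
    beta (Gen.sigb i :: l) g = beta l (g * (gs i)⁻¹) := rfl
theorem beta_rho (i : Fin (n - 1)) (l : List (Gen n)) (g : G n) :
    beta (Gen.rho i :: l) g = beta l (g * gr i) := rfl
theorem beta_gam (j : Fin n) (l : List (Gen n)) (g : G n) :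
    beta (Gen.gam j :: l) g = beta l (g * gc j) := rfl
theorem beta_tau (i : Fin (n - 1)) (l : List (Gen n)) (g : G n) :
    beta (Gen.tau i :: l) g = bnd g i :: beta l g := by
  show bnd g i :: beta l (g * 1) = bnd g i :: beta l g
  rw [mul_one]

/-! ### the composite homomorphism `Θ = Φ ∘ Ψ` -/

def Theta (n : ℕ) : STVB n →* K n := (Phi n).comp (Psi n)

theorem Theta_sig (i : Fin (n - 1)) : Theta n (mkS n (Ws i)) = inr (gs i) := by
  show Phi n (Psi n (PresentedMonoid.of (Rel n) (Gen.sig i))) = _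
  rw [Psi, PresentedMonoid.lift_of]
  exact PresentedGroup.toGroup.of _
theorem Theta_sigb (i : Fin (n - 1)) : Theta n (mkS n (Wsb i)) = inr ((gs i)⁻¹) := by
  show Phi n (Psi n (PresentedMonoid.of (Rel n) (Gen.sigb i))) = _
  rw [Psi, PresentedMonoid.lift_of]
  show Phi n ((SingTVG.sigG n i)⁻¹) = _
  rw [map_inv, show Phi n (SingTVG.sigG n i) = inr (gs i) from PresentedGroup.toGroup.of _]
  exact (map_inv (inr : G n →* K n) _).symm
theorem Theta_rho (i : Fin (n - 1)) : Theta n (mkS n (Wr i)) = inr (gr i) := by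
  show Phi n (Psi n (PresentedMonoid.of (Rel n) (Gen.rho i))) = _
  rw [Psi, PresentedMonoid.lift_of]
  exact PresentedGroup.toGroup.of _
theorem Theta_gam (j : Fin n) : Theta n (mkS n (Wg j)) = inr (gc j) := by
  show Phi n (Psi n (PresentedMonoid.of (Rel n) (Gen.gam j))) = _
  rw [Psi, PresentedMonoid.lift_of]
  exact PresentedGroup.toGroup.of _
theorem Theta_tau (i : Fin (n - 1)) : Theta n (mkS n (Wt i)) = inl (cof (bnd 1 i)) := by
  show Phi n (Psi n (PresentedMonoid.of (Rel n) (Gen.tau i))) = _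
  rw [Psi, PresentedMonoid.lift_of]
  exact PresentedGroup.toGroup.of _

theorem inr_mul_inl (g : G n) (x : Gam n) :
    (inr g : K n) * inl x = inl (autG n g x) * inr g := by
  apply SemidirectProduct.ext <;> simp

def gamProd (L : List (B n)) : Gam n := (L.map cof).prod

/-- computing `Θ` on a word -/
theorem L3 : ∀ (l : List (Gen n)) (g : G n),
    inr g * Theta n (mkS n (FreeMonoid.ofList l))
      = inl (gamProd (beta l g)) * inr (g * piH n (FreeMonoid.ofList l)) := by
  intro l
  induction l with
  | nil =>
      intro g
      simp [gamProd, beta_nil, piH]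
  | cons e l ih =>
      intro g
      have hmk : mkS n (FreeMonoid.ofList (e :: l))
          = mkS n (FreeMonoid.of e) * mkS n (FreeMonoid.ofList l) := by
        rw [FreeMonoid.ofList_cons, map_mul]
      have hpi2 : piH n (FreeMonoid.ofList (e :: l)) = fg e * piH n (FreeMonoid.ofList l) := by
        rw [FreeMonoid.ofList_cons, map_mul, piH, FreeMonoid.lift_eval_of]
      rw [hmk, map_mul, hpi2]
      cases e with
      | sig i =>
          rw [show Theta n (mkS n (FreeMonoid.of (Gen.sig i))) = inr (gs i) from Theta_sig i,
            beta_sig, ← mul_assoc, ← map_mul, ih (g * gs i), show (fg (Gen.sig i) : G n) = gs i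
            from rfl, mul_assoc]
      | sigb i =>
          rw [show Theta n (mkS n (FreeMonoid.of (Gen.sigb i))) = inr ((gs i)⁻¹) from
            Theta_sigb i, beta_sigb, ← mul_assoc, ← map_mul, ih (g * (gs i)⁻¹),
            show (fg (Gen.sigb i) : G n) = (gs i)⁻¹ from rfl, mul_assoc]
      | rho i =>
          rw [show Theta n (mkS n (FreeMonoid.of (Gen.rho i))) = inr (gr i) from Theta_rho i,
            beta_rho, ← mul_assoc, ← map_mul, ih (g * gr i), show (fg (Gen.rho i) : G n) = gr i
            from rfl, mul_assoc]
      | gam j =>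
          rw [show Theta n (mkS n (FreeMonoid.of (Gen.gam j))) = inr (gc j) from Theta_gam j,
            beta_gam, ← mul_assoc, ← map_mul, ih (g * gc j), show (fg (Gen.gam j) : G n) = gc j
            from rfl, mul_assoc]
      | tau i =>
          rw [show Theta n (mkS n (FreeMonoid.of (Gen.tau i))) = inl (cof (bnd 1 i)) from
            Theta_tau i, beta_tau, show (fg (Gen.tau i) : G n) = 1 from rfl, one_mul,
            ← mul_assoc, inr_mul_inl, mul_assoc, ih g]
          rw [show gamProd (bnd g i :: beta l g) = cof (bnd g i) * gamProd (beta l g) from by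
            simp [gamProd]]
          rw [autG_cof, actB_bnd, mul_one,
            map_mul (SemidirectProduct.inl : Gam n →* K n) (cof (bnd g i)) (gamProd (beta l g)),
            mul_assoc]

/-- computing a word in `STVB n` from its band data -/
theorem L1 : ∀ (l : List (Gen n)) (g : G n),
    im n g * mkS n (FreeMonoid.ofList l)
      = TProd (beta l g) * im n (g * piH n (FreeMonoid.ofList l)) := by
  intro l
  induction l with
  | nil =>
      intro g
      simp [TProd, beta_nil, piH]
  | cons e l ih =>
      intro g
      have hmk : mkS n (FreeMonoid.ofList (e :: l))
          = mkS n (FreeMonoid.of e) * mkS n (FreeMonoid.ofList l) := by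
        rw [FreeMonoid.ofList_cons, map_mul]
      have hpi2 : piH n (FreeMonoid.ofList (e :: l)) = fg e * piH n (FreeMonoid.ofList l) := by
        rw [FreeMonoid.ofList_cons, map_mul, piH, FreeMonoid.lift_eval_of]
      rw [hmk, hpi2]
      cases e with
      | sig i =>
          rw [show mkS n (FreeMonoid.of (Gen.sig i)) = im n (gs i) from (im_gs i).symm,
            beta_sig, ← mul_assoc, ← map_mul, ih (g * gs i),
            show (fg (Gen.sig i) : G n) = gs i from rfl, mul_assoc]
      | sigb i =>
          rw [show mkS n (FreeMonoid.of (Gen.sigb i)) = im n ((gs i)⁻¹) from (im_gs_inv i).symm,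
            beta_sigb, ← mul_assoc, ← map_mul, ih (g * (gs i)⁻¹),
            show (fg (Gen.sigb i) : G n) = (gs i)⁻¹ from rfl, mul_assoc]
      | rho i =>
          rw [show mkS n (FreeMonoid.of (Gen.rho i)) = im n (gr i) from (im_gr i).symm,
            beta_rho, ← mul_assoc, ← map_mul, ih (g * gr i),
            show (fg (Gen.rho i) : G n) = gr i from rfl, mul_assoc]
      | gam j =>
          rw [show mkS n (FreeMonoid.of (Gen.gam j)) = im n (gc j) from (im_gc j).symm,
            beta_gam, ← mul_assoc, ← map_mul, ih (g * gc j),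
            show (fg (Gen.gam j) : G n) = gc j from rfl, mul_assoc]
      | tau i =>
          rw [show mkS n (FreeMonoid.of (Gen.tau i)) = tauE n i from rfl, beta_tau,
            show (fg (Gen.tau i) : G n) = 1 from rfl, one_mul]
          rw [show TProd (bnd g i :: beta l g) = T (bnd g i) * TProd (beta l g) from by
            simp [TProd]]
          rw [mul_assoc, ← ih g, T_bnd, mul_assoc (im n g * tauE n i), im_cancel', mul_assoc]

end Emb
namespace Emb

open SingTVB SemidirectProduct

variable {n : ℕ}

theorem comm_aux {H : Type*} [Group H] {x y : H} (h : x * y = y * x) :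
    x * y * x⁻¹ * y⁻¹ = 1 := by rw [h]; group

open Classical in
/-- counting occurrences of a band -/
noncomputable def cntHom (a : B n) : Gam n →* Multiplicative ℤ :=
  PresentedGroup.toGroup (f := fun b => Multiplicative.ofAdd (if b = a then (1 : ℤ) else 0)) (by
    rintro r ⟨x, y, hD, rfl⟩
    simp only [map_mul, map_inv, FreeGroup.lift_apply_of]
    exact comm_aux (mul_comm _ _))

open Classical in
@[simp] theorem cntHom_cof (a b : B n) :
    cntHom a (cof b) = Multiplicative.ofAdd (if b = a then (1 : ℤ) else 0) :=
  PresentedGroup.toGroup.of _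

open Classical in
theorem cnt_gamProd (a : B n) : ∀ L : List (B n),
    cntHom a (gamProd L)
      = Multiplicative.ofAdd (((L.filter (fun c => decide (c = a))).length : ℤ)) := by
  intro L
  induction L with
  | nil => simp [gamProd]
  | cons c L ih =>
      have hc : gamProd (c :: L) = cof c * gamProd L := by simp [gamProd]
      rw [hc, map_mul, ih, cntHom_cof]
      by_cases h : c = a
      · subst h
        simp only [if_pos rfl, List.filter_cons, decide_eq_true_eq, eq_self_iff_true, if_true,
          List.length_cons, ← ofAdd_add]
        congr 1
        push_cast
        omega
      · have hd : (decide (c = a)) = false := by simpa using h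
        simp only [if_neg h, List.filter_cons, hd]
        rw [← ofAdd_add]
        simp

open Classical in
/-- projecting onto a pair of non-independent bands -/
noncomputable def pairHom (a b : B n) (hnd : ¬ indB n a b) : Gam n →* FreeGroup (B n) :=
  PresentedGroup.toGroup (f := fun c => if c = a ∨ c = b then FreeGroup.of c else 1) (by
    rintro r ⟨x, y, hD, rfl⟩
    simp only [map_mul, map_inv, FreeGroup.lift_apply_of]
    apply comm_aux
    by_cases hx : x = a ∨ x = b
    · by_cases hy : y = a ∨ y = b
      · rcases hx with rfl | rfl <;> rcases hy with rfl | rfl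
        · rfl
        · exact absurd (Or.inl hD) hnd
        · exact absurd (Or.inr hD) hnd
        · rfl
      · simp [hy]
    · simp [hx])

open Classical in
@[simp] theorem pairHom_cof (a b : B n) (hnd : ¬ indB n a b) (c : B n) :
    pairHom a b hnd (cof c) = if c = a ∨ c = b then FreeGroup.of c else 1 :=
  PresentedGroup.toGroup.of _

open Classical in
theorem pair_gamProd (a b : B n) (hnd : ¬ indB n a b) : ∀ L : List (B n),
    pairHom a b hnd (gamProd L)
      = ((L.filter (fun c => decide (c = a ∨ c = b))).map FreeGroup.of).prod := by
  intro L
  induction L with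
  | nil => simp [gamProd]
  | cons c L ih =>
      have hc : gamProd (c :: L) = cof c * gamProd L := by simp [gamProd]
      rw [hc, map_mul, ih, pairHom_cof]
      by_cases h : c = a ∨ c = b
      · have hd : (decide (c = a ∨ c = b)) = true := by simpa using h
        simp [if_pos h, List.filter_cons, hd]
      · have hd : (decide (c = a ∨ c = b)) = false := by simpa using h
        simp [if_neg h, List.filter_cons, hd]

end Emb
open SingTVB SingTVG in
/-- the canonical map `STVB n → STVG n`, sending `σᵢ ↦ σᵢ`, `σ̄ᵢ ↦ σᵢ⁻¹`,
`ρᵢ ↦ ρᵢ`, `τᵢ ↦ τᵢ`, `γⱼ ↦ γⱼ`, is a well-defined injective monoid homomorphism: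
the singular twisted virtual braid monoid embeds in the singular twisted virtual group. -/
theorem stvb_embeds_in_stvg (n : ℕ) (hn : 2 ≤ n) :
    ∃ Ψ : STVB n →* STVG n,
      (∀ i : Fin (n - 1), Ψ (sigE n i) = sigG n i) ∧
      (∀ i : Fin (n - 1), Ψ (sigbE n i) = (sigG n i)⁻¹) ∧
      (∀ i : Fin (n - 1), Ψ (rhoE n i) = rhoG n i) ∧
      (∀ i : Fin (n - 1), Ψ (tauE n i) = tauG n i) ∧
      (∀ j : Fin n, Ψ (gamE n j) = gamG n j) ∧
      Function.Injective Ψ := by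
  classical
  refine ⟨Emb.Psi n, fun i => rfl, fun i => rfl, fun i => rfl, fun i => rfl, fun j => rfl, ?_⟩
  intro x y hxy
  obtain ⟨a, rfl⟩ := PresentedMonoid.surjective_mk (rels := Rel n) x
  obtain ⟨b, rfl⟩ := PresentedMonoid.surjective_mk (rels := Rel n) y
  -- pass to Θ = Φ ∘ Ψ
  have hth : Emb.Theta n (mkS n a) = Emb.Theta n (mkS n b) := congrArg (Emb.Phi n) hxy
  -- compute both sides of hth via L3
  have h3a := Emb.L3 (FreeMonoid.toList a) (1 : Emb.G n)
  have h3b := Emb.L3 (FreeMonoid.toList b) (1 : Emb.G n)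
  simp only [FreeMonoid.ofList_toList, map_one, one_mul] at h3a h3b
  rw [h3a, h3b] at hth
  -- extract the two components
  have hl : Emb.gamProd (Emb.beta (FreeMonoid.toList a) 1)
      = Emb.gamProd (Emb.beta (FreeMonoid.toList b) 1) := by
    have := congrArg SemidirectProduct.left hth
    simpa using this
  have hr : Emb.piH n a = Emb.piH n b := by
    have := congrArg SemidirectProduct.right hth
    simpa using this
  set La := Emb.beta (FreeMonoid.toList a) (1 : Emb.G n) with hLa
  set Lb := Emb.beta (FreeMonoid.toList b) (1 : Emb.G n) with hLb
  -- counts agree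
  have hcnt : ∀ c : Emb.B n, (La.filter (fun x => decide (x = c))).length
      = (Lb.filter (fun x => decide (x = c))).length := by
    intro c
    have h1 := congrArg (Emb.cntHom c) hl
    rw [Emb.cnt_gamProd, Emb.cnt_gamProd] at h1
    have h2 : ((La.filter (fun x => decide (x = c))).length : ℤ)
        = ((Lb.filter (fun x => decide (x = c))).length : ℤ) :=
      Multiplicative.ofAdd.injective h1
    exact_mod_cast h2
  -- pair projections agree
  have hpair : ∀ c d : Emb.B n, c ≠ d → ¬ Emb.indB n c d →
      La.filter (fun x => decide (x = c ∨ x = d))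
        = Lb.filter (fun x => decide (x = c ∨ x = d)) := by
    intro c d _ hnd
    have h1 := congrArg (Emb.pairHom c d hnd) hl
    rw [Emb.pair_gamProd, Emb.pair_gamProd] at h1
    exact TraceAux.posProd_injective h1
  -- trace relation between the band words
  have htr : TraceAux.TraceRel (Emb.indB n) La Lb :=
    TraceAux.projection_lemma Emb.indB_symm La Lb hcnt hpair
  have hTP := Emb.TProd_trace htr
  -- reconstruct both words via L1
  have h1a := Emb.L1 (FreeMonoid.toList a) (1 : Emb.G n)
  have h1b := Emb.L1 (FreeMonoid.toList b) (1 : Emb.G n)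
  simp only [FreeMonoid.ofList_toList, map_one, one_mul] at h1a h1b
  show mkS n a = mkS n b
  rw [h1a, h1b, ← hLa, ← hLb, hTP, hr]
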